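/- arXiv:1011.1708 — 2 statements merged into one kernel-verified Lean document; each statement's English description precedes it below -/
import Mathlib

section
/- Let T be a string of length n ≥ 0 over a finite alphabet A, and let T⁺ be the string of length n+1 obtained by inserting one character into T at an arbitrary position. Then |n·H₀(T) − (n+1)·H₀(T⁺)| ≤ 4 log₂(n+1) + 4 log₂ |A|. -/
open Finset

noncomputable def H0 {A : Type*} [Fintype A] [DecidableEq A] (T : List A) : ℝ :=
  -∑ c : A, ((T.count c : ℝ) / T.length) * Real.logb 2 ((T.count c : ℝ) / T.length)

noncomputable def fl (k : ℕ) : ℝ := (k : ℝ) * Real.logb 2 k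

lemma fl_mono (k : ℕ) : fl k ≤ fl (k + 1) := by
  unfold fl
  rcases Nat.eq_zero_or_pos k with h | h
  · subst h; simp [Real.logb]
  · push_cast
    have h1 : (1:ℝ) ≤ k := by exact_mod_cast h
    have : Real.logb 2 k ≤ Real.logb 2 (k+1) :=
      Real.logb_le_logb_of_le (by norm_num) (by linarith) (by linarith)
    nlinarith [Real.logb_nonneg (by norm_num : (1:ℝ) < 2) (by linarith : (1:ℝ) ≤ (k:ℝ)+1)]

lemma fl_step (k : ℕ) : fl (k + 1) - fl k ≤ Real.logb 2 (k + 1) + 2 := by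
  unfold fl
  rcases Nat.eq_zero_or_pos k with h | h
  · subst h; simp [Real.logb]
  · have hk : (1:ℝ) ≤ k := by exact_mod_cast h
    have hkpos : (0:ℝ) < k := by linarith
    have hlog2 : (0.6931471803 : ℝ) < Real.log 2 := Real.log_two_gt_d9
    have hdiff : Real.log (k+1) - Real.log k ≤ 1 / k := by
      have := Real.log_le_sub_one_of_pos (show (0:ℝ) < (k+1)/k by positivity)
      rw [Real.log_div (by linarith) (by linarith)] at this
      have : Real.log (k+1) - Real.log k ≤ (k+1)/k - 1 := this
      have heq : ((k:ℝ)+1)/k - 1 = 1 / k := by field_simp; ring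
      linarith [heq ▸ this]
    have key : (k:ℝ) * (Real.logb 2 (k+1) - Real.logb 2 k) ≤ 2 := by
      rw [Real.logb, Real.logb, div_sub_div_same, ← mul_div_assoc]
      have h1 : (k:ℝ) * ((Real.log (k+1) - Real.log k)) ≤ 1 := by
        calc (k:ℝ) * ((Real.log (k+1) - Real.log k)) ≤ k * (1/k) := by
              apply mul_le_mul_of_nonneg_left hdiff (le_of_lt hkpos)
          _ = 1 := by field_simp
      calc (k:ℝ) * (Real.log (k+1) - Real.log k) / Real.log 2
            ≤ 1 / Real.log 2 := by
              apply div_le_div_of_nonneg_right h1 (by linarith) |>.trans_eq rfl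
        _ ≤ 2 := by
              rw [div_le_iff₀ (by linarith)]; linarith
    push_cast
    nlinarith [key]

lemma sum_count_fin {A : Type*} [Fintype A] [DecidableEq A] (T : List A) :
    ∑ c : A, T.count c = T.length := by
  induction T with
  | nil => simp
  | cons a t ih => simp [List.count_cons, Finset.sum_add_distrib, ih]

lemma H0_mul {A : Type*} [Fintype A] [DecidableEq A] (T : List A) :
    (T.length : ℝ) * H0 T = fl T.length - ∑ c : A, fl (T.count c) := by
  rcases eq_or_ne T.length 0 with h | h
  · have hT : T = [] := List.length_eq_zero_iff.mp h
    subst hT; simp [H0, fl]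
  · have hn : (0:ℝ) < T.length := by
      have : 0 < T.length := Nat.pos_of_ne_zero h
      exact_mod_cast this
    unfold H0 fl
    rw [mul_neg, Finset.mul_sum]
    have hterm : ∀ c : A,
        (T.length:ℝ) * (((T.count c : ℝ) / T.length) * Real.logb 2 ((T.count c : ℝ) / T.length))
        = (T.count c : ℝ) * Real.logb 2 (T.count c) - (T.count c : ℝ) * Real.logb 2 T.length := by
      intro c
      rcases eq_or_ne (T.count c) 0 with hc | hc
      · simp [hc]
      · have hm : (0:ℝ) < T.count c := by
          have : 0 < T.count c := Nat.pos_of_ne_zero hc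
          exact_mod_cast this
        rw [Real.logb_div (ne_of_gt hm) (ne_of_gt hn)]
        field_simp
    rw [Finset.sum_congr rfl (fun c _ => hterm c), Finset.sum_sub_distrib,
      ← Finset.sum_mul]
    have hsum : ∑ c : A, (T.count c : ℝ) = (T.length : ℝ) := by
      rw [← Nat.cast_sum]
      exact_mod_cast congrArg (Nat.cast (R := ℝ)) (sum_count_fin T)
    rw [hsum]
    ring

theorem stmt2 {A : Type*} [Fintype A] [DecidableEq A]
    (T T₁ T₂ : List A) (c : A)
    (hT : T = T₁ ++ T₂) :
    |(T.length : ℝ) * H0 T - ((T.length : ℝ) + 1) * H0 (T₁ ++ c :: T₂)| ≤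
      4 * Real.logb 2 (T.length + 1) + 4 * Real.logb 2 (Fintype.card A) := by
  set T' : List A := T₁ ++ c :: T₂ with hT'
  have hlen : T'.length = T.length + 1 := by simp [hT', hT]; omega
  have hcount : ∀ x : A, T'.count x = T.count x + if c = x then 1 else 0 := by
    intro x
    simp [hT', hT, List.count_append, List.count_cons]
    omega
  set n := T.length with hn
  set m := T.count c with hm
  have hsum' : ∑ x : A, fl (T'.count x) = (∑ x : A, fl (T.count x)) + (fl (m+1) - fl m) := by
    have : ∀ x : A, fl (T'.count x) = fl (T.count x) + (if c = x then fl (m+1) - fl m else 0) := by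
      intro x
      rcases eq_or_ne c x with h | h
      · subst h; rw [hcount]; simp [hm]
      · rw [hcount]; simp [h]
    rw [Finset.sum_congr rfl (fun x _ => this x), Finset.sum_add_distrib,
      Finset.sum_ite_eq (Finset.univ : Finset A) c (fun _ => fl (m+1) - fl m)]
    simp
  have key : (T.length : ℝ) * H0 T - ((T.length : ℝ) + 1) * H0 T' =
      (fl n - fl (n+1)) + (fl (m+1) - fl m) := by
    have h1 := H0_mul T
    have h2 := H0_mul T'
    rw [hlen] at h2
    push_cast at h2
    rw [h1, h2, hsum']
    ring
  rw [key]
  have hmn : m ≤ n := List.count_le_length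
  have b1 : fl n ≤ fl (n+1) := fl_mono n
  have b2 : fl (n+1) - fl n ≤ Real.logb 2 (n+1) + 2 := fl_step n
  have b3 : fl m ≤ fl (m+1) := fl_mono m
  have b4 : fl (m+1) - fl m ≤ Real.logb 2 (m+1) + 2 := fl_step m
  have b5 : Real.logb 2 ((m:ℝ)+1) ≤ Real.logb 2 ((n:ℝ)+1) := by
    apply Real.logb_le_logb_of_le (by norm_num) (by positivity)
    have : (m:ℝ) ≤ n := by exact_mod_cast hmn
    linarith
  have hla : (0:ℝ) ≤ Real.logb 2 (Fintype.card A) := by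
    apply Real.logb_nonneg (by norm_num)
    have : 1 ≤ Fintype.card A := Fintype.card_pos_iff.mpr ⟨c⟩
    exact_mod_cast this
  have hln : (0:ℝ) ≤ Real.logb 2 ((n:ℝ)+1) := by
    apply Real.logb_nonneg (by norm_num)
    have : (0:ℝ) ≤ n := by positivity
    linarith
  have habs : |(fl n - fl (n+1)) + (fl (m+1) - fl m)| ≤ Real.logb 2 ((n:ℝ)+1) + 2 := by
    rw [abs_le]
    constructor
    · push_cast at b2 b4 b5 ⊢
      linarith
    · push_cast at b2 b4 b5 ⊢
      linarith
  rcases Nat.eq_zero_or_pos n with h0 | h1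
  · have hm0 : m = 0 := by omega
    have hz : fl n - fl (n+1) + (fl (m+1) - fl m) = 0 := by rw [h0, hm0]; ring
    rw [hz, abs_zero]
    linarith
  · have h2n : (2:ℝ) ≤ (n:ℝ) + 1 := by
      have : (1:ℝ) ≤ n := by exact_mod_cast h1
      linarith
    have hge1 : (1:ℝ) ≤ Real.logb 2 ((n:ℝ)+1) := by
      calc (1:ℝ) = Real.logb 2 2 := (Real.logb_self_eq_one (by norm_num)).symm
        _ ≤ Real.logb 2 ((n:ℝ)+1) := Real.logb_le_logb_of_le (by norm_num) (by norm_num) h2n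
    calc |(fl n - fl (n+1)) + (fl (m+1) - fl m)| ≤ Real.logb 2 ((n:ℝ)+1) + 2 := habs
      _ ≤ 4 * Real.logb 2 ((n:ℝ)+1) + 4 * Real.logb 2 (Fintype.card A) := by linarith
end

section
/- Let T be a string of length n ≥ 0 over a finite alphabet A, and let T′ be the string obtained by replacing one character of T at an arbitrary position by another character of A. Then |n·H₀(T) − n·H₀(T′)| ≤ 4 log₂(n+1) + 3 log₂ |A|. -/
open Finset

noncomputable def fent (k : ℕ) : ℝ := (k : ℝ) * Real.logb 2 k

lemma sum_count_univ {A : Type*} [Fintype A] [DecidableEq A] (T : List A) :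
    ∑ a : A, T.count a = T.length := by
  have := Multiset.sum_count_eq_card (s := (Finset.univ : Finset A))
    (m := (↑T : Multiset A)) (fun a _ => Finset.mem_univ a)
  simpa using this

lemma nH0_eq {A : Type*} [Fintype A] [DecidableEq A] (T : List A) (hT : 0 < T.length) :
    (T.length : ℝ) * H0 T
      = (T.length : ℝ) * Real.logb 2 T.length - ∑ c : A, fent (T.count c) := by
  have hn : (0:ℝ) < T.length := by exact_mod_cast hT
  have key : ∀ x : A,
      (T.length:ℝ) * (((T.count x : ℝ) / T.length) * Real.logb 2 ((T.count x : ℝ) / T.length))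
      = fent (T.count x) - (T.count x : ℝ) * Real.logb 2 T.length := by
    intro x
    rcases Nat.eq_zero_or_pos (T.count x) with h | h
    · simp [h, fent]
    · have hm : (0:ℝ) < T.count x := by exact_mod_cast h
      rw [Real.logb_div hm.ne' hn.ne']
      unfold fent
      field_simp
  unfold H0
  rw [mul_neg, Finset.mul_sum]
  rw [Finset.sum_congr rfl (fun x _ => key x)]
  rw [Finset.sum_sub_distrib, ← Finset.sum_mul]
  have hs : ∑ x : A, (T.count x : ℝ) = (T.length : ℝ) := by
    rw [← Nat.cast_sum, sum_count_univ]
  rw [hs]; ring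

lemma fent_mono (k : ℕ) : fent k ≤ fent (k+1) := by
  unfold fent
  rcases Nat.eq_zero_or_pos k with h | h
  · simp [h]
  · have h1 : (1:ℝ) ≤ k := by exact_mod_cast h
    push_cast
    apply mul_le_mul (by linarith)
    · exact Real.logb_le_logb_of_le one_lt_two (by linarith) (by linarith)
    · exact Real.logb_nonneg one_lt_two h1
    · linarith

lemma fent_step (k n : ℕ) (hn : k + 1 ≤ n) :
    fent (k+1) - fent k ≤ 2 * Real.logb 2 ((n : ℝ) + 1) := by
  have hlog2 : (0:ℝ) < Real.log 2 := Real.log_pos one_lt_two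
  rcases Nat.eq_zero_or_pos k with h | hk
  · have hn1 : (1:ℝ) ≤ (n:ℝ) + 1 := by
      have : (0:ℝ) ≤ (n:ℝ) := Nat.cast_nonneg n
      linarith
    have := Real.logb_nonneg (b := 2) one_lt_two hn1
    simp [h, fent]
    linarith
  have hk1 : (1:ℝ) ≤ (k:ℝ) := by exact_mod_cast hk
  have hn2 : (2:ℕ) ≤ n := by omega
  have hn3 : (3:ℝ) ≤ (n:ℝ) + 1 := by
    have : (2:ℝ) ≤ (n:ℝ) := by exact_mod_cast hn2
    linarith
  have hkn : (k:ℝ) + 1 ≤ (n:ℝ) := by exact_mod_cast hn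
  -- numerator bound
  have hstep : (k:ℝ) * (Real.log ((k:ℝ)+1) - Real.log k) ≤ 1 := by
    have hq : Real.log ((k:ℝ)+1) - Real.log k = Real.log (((k:ℝ)+1)/k) :=
      (Real.log_div (by linarith) (by linarith)).symm
    have hle : Real.log (((k:ℝ)+1)/k) ≤ 1/(k:ℝ) := by
      have h := Real.log_le_sub_one_of_pos (show (0:ℝ) < ((k:ℝ)+1)/(k:ℝ) by positivity)
      have he : ((k:ℝ)+1)/(k:ℝ) - 1 = 1/(k:ℝ) := by field_simp; ring
      linarith
    rw [hq]
    calc (k:ℝ) * Real.log (((k:ℝ)+1)/k) ≤ (k:ℝ) * (1/(k:ℝ)) :=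
          mul_le_mul_of_nonneg_left hle (by linarith)
      _ = 1 := by field_simp
  have hexpand : ((k:ℝ)+1) * Real.log ((k:ℝ)+1)
      = (k:ℝ) * Real.log ((k:ℝ)+1) + Real.log ((k:ℝ)+1) := by ring
  have hnum : ((k:ℝ)+1) * Real.log ((k:ℝ)+1) - (k:ℝ) * Real.log (k:ℝ)
      ≤ Real.log ((k:ℝ)+1) + 1 := by
    rw [mul_sub] at hstep
    linarith
  have h1 : (1:ℝ) ≤ Real.log ((n:ℝ)+1) := by
    rw [Real.le_log_iff_exp_le (by linarith)]
    have := Real.exp_one_lt_d9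
    linarith
  have h2 : Real.log ((k:ℝ)+1) ≤ Real.log ((n:ℝ)+1) :=
    Real.log_le_log (by linarith) (by linarith)
  have goal' : ((k:ℝ)+1) * Real.log ((k:ℝ)+1) - (k:ℝ) * Real.log (k:ℝ)
      ≤ 2 * Real.log ((n:ℝ)+1) := by linarith
  unfold fent Real.logb
  push_cast
  rw [show ((k:ℝ)+1) * (Real.log ((k:ℝ)+1) / Real.log 2)
        - (k:ℝ) * (Real.log (k:ℝ) / Real.log 2)
      = (((k:ℝ)+1) * Real.log ((k:ℝ)+1) - (k:ℝ) * Real.log (k:ℝ)) / Real.log 2 from by ring,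
     show 2 * (Real.log ((n:ℝ)+1) / Real.log 2)
      = (2 * Real.log ((n:ℝ)+1)) / Real.log 2 from by ring]
  exact (div_le_div_iff_of_pos_right hlog2).mpr goal'

theorem stmt3 {A : Type*} [Fintype A] [DecidableEq A]
    (T T' T₁ T₂ : List A) (c c' : A)
    (hT : T = T₁ ++ c :: T₂) (hT' : T' = T₁ ++ c' :: T₂) :
    |(T.length : ℝ) * H0 T - (T.length : ℝ) * H0 T'| ≤
      4 * Real.logb 2 (T.length + 1) + 3 * Real.logb 2 (Fintype.card A) := by
  have hcard : (0:ℝ) ≤ Real.logb 2 (Fintype.card A) := by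
    apply Real.logb_nonneg one_lt_two
    have : 0 < Fintype.card A := Fintype.card_pos_iff.mpr ⟨c⟩
    exact_mod_cast this
  have hL0 : (0:ℝ) ≤ Real.logb 2 ((T.length:ℝ) + 1) := by
    apply Real.logb_nonneg one_lt_two
    have : (0:ℝ) ≤ (T.length:ℝ) := Nat.cast_nonneg _
    linarith
  rcases eq_or_ne c c' with rfl | hne
  · subst hT
    subst hT'
    rw [sub_self, abs_zero]
    linarith
  · have hpos : 0 < T.length := by simp [hT]
    have hlen' : T'.length = T.length := by simp [hT, hT']
    set a := T₁.count c + T₂.count c with ha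
    set b := T₁.count c' + T₂.count c' with hb
    have hca : T.count c = a + 1 := by
      simp [hT, List.count_append, List.count_cons, ha]
      omega
    have hca' : T'.count c = a := by
      simp [hT', List.count_append, List.count_cons, hne, Ne.symm hne, ha]
    have hcb : T.count c' = b := by
      simp [hT, List.count_append, List.count_cons, (Ne.symm hne), hne, hb]
    have hcb' : T'.count c' = b + 1 := by
      simp [hT', List.count_append, List.count_cons, hb]
      omega
    have hother : ∀ x : A, x ≠ c → x ≠ c' → T'.count x = T.count x := by
      intro x h1 h2
      simp [hT, hT', List.count_append, List.count_cons, h1, h2, Ne.symm h1, Ne.symm h2]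
    have haN : a + 1 ≤ T.length := hca ▸ List.count_le_length (a := c) (l := T)
    have hbN : b + 1 ≤ T.length := by
      have := List.count_le_length (a := c') (l := T')
      rw [hcb', hlen'] at this
      exact this
    have e1 := nH0_eq T hpos
    have e2 : (T.length:ℝ) * H0 T'
        = (T.length:ℝ) * Real.logb 2 T.length - ∑ x : A, fent (T'.count x) := by
      have h := nH0_eq T' (by rw [hlen']; exact hpos)
      rw [hlen'] at h
      exact_mod_cast h
    rw [e1, e2]
    have hd : ((T.length:ℝ) * Real.logb 2 T.length - ∑ x : A, fent (T.count x))
        - ((T.length:ℝ) * Real.logb 2 T.length - ∑ x : A, fent (T'.count x))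
        = ∑ x : A, (fent (T'.count x) - fent (T.count x)) := by
      rw [Finset.sum_sub_distrib]; ring
    rw [hd]
    have hsum : ∑ x : A, (fent (T'.count x) - fent (T.count x))
        = (fent a - fent (a+1)) + (fent (b+1) - fent b) := by
      rw [Finset.sum_eq_add_of_mem c c' (mem_univ c) (mem_univ c') hne ?_]
      · rw [hca, hca', hcb, hcb']
      · intro x _ hx
        rw [hother x hx.1 hx.2, sub_self]
    rw [hsum]
    have hD1 : 0 ≤ fent (a+1) - fent a := by linarith [fent_mono a]
    have hD2 : 0 ≤ fent (b+1) - fent b := by linarith [fent_mono b]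
    have hD1' := fent_step a T.length haN
    have hD2' := fent_step b T.length hbN
    rw [abs_le]
    constructor <;> [nlinarith; nlinarith]
end
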